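/- Fix N ∈ ℕ and an occupancy vector ζ : {0,…,N−1} → Bool, and define the Top-Down greedy selection s : {0,…,N−1} → Bool by s(0) = ζ(0) and s(j+1) = (ζ(j+1) and not s(j)). Then: (i) s(j) = true implies ζ(j) = true; (ii) there is no j with s(j) = s(j+1) = true; and (iii) for every subset T of {j : ζ(j) = true} containing no two consecutive indices, the cardinality of T is at most the cardinality of {j : s(j) = true}. In other words, the Top-Down policy selects a maximum-cardinality independent subset of the nonempty queues in the path graph, i.e., it is a Maximum Size Matching policy for every N. -/

import Mathlib

/-- The Top-Down greedy selection on a path graph with occupancy vector `ζ`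
(`s 0 = ζ 0`, `s (j+1) = ζ (j+1) && !s j`) serves only nonempty queues, never two
adjacent queues, and selects a maximum-cardinality independent subset of the nonempty
queues among `{0, …, N-1}`; i.e. the Top-Down policy is Maximum Size Matching for every `N`. -/
theorem topDown_greedy_is_MSM (N : ℕ) (ζ s : ℕ → Bool)
    (hs0 : s 0 = ζ 0)
    (hsS : ∀ j, s (j + 1) = (ζ (j + 1) && !s j)) :
    (∀ j < N, s j = true → ζ j = true) ∧
    (∀ j, j + 1 < N → ¬(s j = true ∧ s (j + 1) = true)) ∧
    (∀ T : Finset ℕ,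
      (∀ j ∈ T, j < N ∧ ζ j = true) →
      (∀ j ∈ T, j + 1 ∉ T) →
      T.card ≤ ((Finset.range N).filter (fun j => s j = true)).card) := by
  have hζ : ∀ j, s j = true → ζ j = true := by
    intro j hj
    cases j with
    | zero => rwa [hs0] at hj
    | succ k =>
      rw [hsS k] at hj
      exact ((Bool.and_eq_true _ _).mp hj).1
  refine ⟨fun j _ hj => hζ j hj, ?_, ?_⟩
  · rintro j _ ⟨h1, h2⟩
    rw [hsS j, h1] at h2
    simp at h2
  · intro T hT hInd
    -- key fact: if t ∈ T and s t = false, then t = k+1 with s k = true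
    have key : ∀ t ∈ T, s t = false → ∃ k, t = k + 1 ∧ s k = true := by
      intro t ht hst
      obtain ⟨htN, htζ⟩ := hT t ht
      cases t with
      | zero => rw [hs0, htζ] at hst; simp at hst
      | succ k =>
        refine ⟨k, rfl, ?_⟩
        rw [hsS k, htζ] at hst
        simpa using hst
    apply Finset.card_le_card_of_injOn (fun t => if s t then t else t - 1)
    · intro t ht
      obtain ⟨htN, htζ⟩ := hT t ht
      by_cases hst : s t = true
      · simp [Finset.mem_filter, hst, htN]
      · have hst' : s t = false := by simpa using hst
        obtain ⟨k, rfl, hk⟩ := key t ht hst'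
        simp only [hst', Bool.false_eq_true, if_false, Finset.mem_coe, Finset.mem_filter, Finset.mem_range,
          Nat.add_sub_cancel]
        exact ⟨Nat.lt_of_succ_lt htN, hk⟩
    · intro a ha b hb hab
      simp only at hab
      by_cases hsa : s a = true <;> by_cases hsb : s b = true
      · rwa [if_pos hsa, if_pos hsb] at hab
      · have hsb' : s b = false := by simpa using hsb
        obtain ⟨k, rfl, hk⟩ := key b hb hsb'
        rw [if_pos hsa, if_neg (by simp [hsb']), Nat.add_sub_cancel] at hab
        subst hab
        exact absurd hb (hInd a ha)
      · have hsa' : s a = false := by simpa using hsa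
        obtain ⟨k, rfl, hk⟩ := key a ha hsa'
        rw [if_neg (by simp [hsa']), if_pos hsb, Nat.add_sub_cancel] at hab
        subst hab
        exact absurd ha (hInd k hb)
      · have hsa' : s a = false := by simpa using hsa
        have hsb' : s b = false := by simpa using hsb
        obtain ⟨k, rfl, hk⟩ := key a ha hsa'
        obtain ⟨m, rfl, hm⟩ := key b hb hsb'
        rw [if_neg (by simp [hsa']), if_neg (by simp [hsb']),
          Nat.add_sub_cancel, Nat.add_sub_cancel] at hab
        rw [hab]
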